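/- Let X be a random variable taking values in {−1, +1} and let W be any observation of X on the same probability space (i.e., condition on any sub-σ-algebra or random variable W). Define mmse(X|W) := E[(X − E[X|W])²] = 1 − E[E[X|W]²] and BER(X|W) := (1 − E[|E[X|W]|])/2. Then (1 − √(1 − mmse(X|W)))/2 ≤ BER(X|W) ≤ mmse(X|W)/2. -/

import Mathlib

open MeasureTheory ProbabilityTheory

noncomputable section

/-- The binary entropy function (base 2). -/
def hb (p : ℝ) : ℝ := -(p * Real.logb 2 p) - (1 - p) * Real.logb 2 (1 - p)

/-- Conditional expectation `E[X | W]` of `X` given the σ-algebra generated by `W`. -/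
def condMean {Ω β E : Type*} [MeasurableSpace Ω] [MeasurableSpace β]
    [NormedAddCommGroup E] [NormedSpace ℝ E] [CompleteSpace E]
    (μ : Measure Ω) (X : Ω → E) (W : Ω → β) : Ω → E :=
  μ[X | MeasurableSpace.comap W inferInstance]

/-- Bit-error probability of the MAP decision rule for `X ∈ {±1}` given `W`. -/
def BER {Ω β : Type*} [MeasurableSpace Ω] [MeasurableSpace β]
    (μ : Measure Ω) (X : Ω → ℝ) (W : Ω → β) : ℝ :=
  (1 - ∫ ω, |condMean μ X W ω| ∂μ) / 2

/-- Minimum mean squared error of estimating `X` from `W`. -/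
def mmse {Ω β : Type*} [MeasurableSpace Ω] [MeasurableSpace β]
    (μ : Measure Ω) (X : Ω → ℝ) (W : Ω → β) : ℝ :=
  ∫ ω, (X ω - condMean μ X W ω) ^ 2 ∂μ

/-- Uniform distribution on `{-1, 1} ⊆ ℝ`. -/
def signMeasure : Measure ℝ := (2 : ENNReal)⁻¹ • (Measure.dirac (-1) + Measure.dirac 1)

/-- Capacity of the BMS channel (in multiplicative-noise form) with noise law `PZ`:
`C = 1 - E[h_b((1 + E[X_u | Y_u])/2)]` where `X_u` is uniform on `{±1}`, independent of
`Z₀ ~ PZ`, and `Y_u = X_u · Z₀`. -/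
def capacity (PZ : Measure ℝ) : ℝ :=
  1 - ∫ p, hb ((1 + condMean (signMeasure.prod PZ)
        (fun q : ℝ × ℝ => q.1) (fun q : ℝ × ℝ => q.1 * q.2) p) / 2) ∂(signMeasure.prod PZ)

/-- Evaluation vector of the multilinear polynomial whose coefficients on monomials
of degree at most `r` are given by `α` (higher-degree coefficients being ignored),
evaluated at the point `v ∈ 𝔽₂^m` with index `i = Σ_j v_j 2^j`. -/
def RMword (r m : ℕ) (α : Finset (Fin m) → ZMod 2) : Fin (2 ^ m) → ZMod 2 :=
  fun i => ∑ S ∈ Finset.univ.filter (fun S : Finset (Fin m) => S.card ≤ r),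
    α S * ∏ j ∈ S, ((((i : ℕ) / 2 ^ (j : ℕ)) % 2 : ℕ) : ZMod 2)

/-- The Reed–Muller code RM(r, m) ⊆ 𝔽₂^{2^m}. -/
def RMcode (r m : ℕ) : Finset (Fin (2 ^ m) → ZMod 2) :=
  Finset.image (RMword r m) Finset.univ

/-- The rate `R(r,m)` of RM(r,m). -/
def RMrate (r m : ℕ) : ℝ := (2 ^ m : ℝ)⁻¹ * ∑ i ∈ Finset.range (r + 1), (m.choose i : ℝ)

/-- BPSK modulation map `c ↦ ((-1)^{c_0}, …, (-1)^{c_{N-1}})`. -/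
def bpsk {N : ℕ} (c : Fin N → ZMod 2) : Fin N → ℝ := fun i => (-1 : ℝ) ^ ((c i).val)

/-- BPSK image of a binary code. -/
def bpskImage {N : ℕ} (C : Finset (Fin N → ZMod 2)) : Finset (Fin N → ℝ) :=
  letI := Classical.decEq (Fin N → ℝ)
  C.image bpsk

/-- BPSK image of RM(r,m). -/
def bpskRM (r m : ℕ) : Finset (Fin (2 ^ m) → ℝ) := bpskImage (RMcode r m)

/-- Uniform probability measure on a finite set. -/
def uniformOnFinset {α : Type*} [MeasurableSpace α] (s : Finset α) : Measure α :=
  (s.card : ENNReal)⁻¹ • ∑ x ∈ s, Measure.dirac x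

/-- `ρ(m) = (6 ln m + 34)/(5 √m)`. -/
def rho (m : ℕ) : ℝ := (6 * Real.log m + 34) / (5 * Real.sqrt m)

/-- Inverse of the binary entropy function restricted to `[0, 1/2]`. -/
def hbInv (u : ℝ) : ℝ := sSup {p : ℝ | p ∈ Set.Icc (0 : ℝ) (1 / 2) ∧ hb p ≤ u}

/-- `ψ(u) = 1 - (1 - 2 h_b^{-1}(u))²`. -/
def psi (u : ℝ) : ℝ := 1 - (1 - 2 * hbInv u) ^ 2

/-- `Ψ(u) = ∫₀^u ψ(v) dv`. -/
def PsiInt (u : ℝ) : ℝ := ∫ v in (0 : ℝ)..u, psi v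

/-- The coefficients `c_k = 1/(ln 2 · 2k (2k-1))`. -/
def ck (k : ℕ) : ℝ := 1 / (Real.log 2 * (2 * k) * (2 * k - 1))

/-- The channel moments `q_k = E[(E[X_u | Y_u])^{2k}]` for uniform input. -/
def qmom (PZ : Measure ℝ) (k : ℕ) : ℝ :=
  ∫ p, (condMean (signMeasure.prod PZ)
      (fun q : ℝ × ℝ => q.1) (fun q : ℝ × ℝ => q.1 * q.2) p) ^ (2 * k) ∂(signMeasure.prod PZ)

end

/-- For a `{±1}`-valued random variable `X` and any observation `W`,
`(1 − √(1 − mmse(X|W)))/2 ≤ BER(X|W) ≤ mmse(X|W)/2`. -/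
theorem stmt_9 {Ω β : Type*} [MeasurableSpace Ω] [MeasurableSpace β]
    (μ : Measure Ω) [IsProbabilityMeasure μ]
    (X : Ω → ℝ) (hX : Measurable X) (hpm : ∀ ω, X ω = -1 ∨ X ω = 1)
    (W : Ω → β) (hW : Measurable W) :
    (1 - Real.sqrt (1 - mmse μ X W)) / 2 ≤ BER μ X W
      ∧ BER μ X W ≤ mmse μ X W / 2 := by
  classical
  have hm : MeasurableSpace.comap W inferInstance ≤ _ := hW.comap_le
  set Y := condMean μ X W with hY
  have hXb : ∀ ω, |X ω| = 1 := fun ω => by rcases hpm ω with h | h <;> simp [h]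
  have hXsq : ∀ ω, X ω ^ 2 = 1 := fun ω => by rcases hpm ω with h | h <;> simp [h]
  have hXint : Integrable X μ := by
    refine Integrable.mono (integrable_const (1:ℝ)) hX.aestronglyMeasurable ?_
    filter_upwards with ω
    simp [Real.norm_eq_abs, hXb ω]
  have hYbdd : ∀ᵐ ω ∂μ, |Y ω| ≤ 1 := by
    have := ae_bdd_condExp_of_ae_bdd (m := MeasurableSpace.comap W inferInstance)
      (μ := μ) (R := 1) (f := X) (by filter_upwards with ω; simp [hXb ω])
    simpa [hY, condMean] using this
  have hYint : Integrable Y μ := integrable_condExp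
  have hYsm : StronglyMeasurable Y :=
    (stronglyMeasurable_condExp (m := MeasurableSpace.comap W inferInstance)).mono hm
  have hYsq_int : Integrable (fun ω => Y ω ^ 2) μ := by
    refine Integrable.mono hYint (hYsm.pow 2).aestronglyMeasurable ?_
    filter_upwards [hYbdd] with ω hb
    rw [Real.norm_eq_abs, Real.norm_eq_abs, abs_pow, sq]
    exact mul_le_of_le_one_left (abs_nonneg _) hb
  have hXYint : Integrable (Y * X) μ := by
    refine Integrable.mono hXint (hYsm.aestronglyMeasurable.mul hX.aestronglyMeasurable) ?_
    filter_upwards [hYbdd] with ω hb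
    simp only [Pi.mul_apply, Real.norm_eq_abs, abs_mul, hXb ω]
    simpa using hb
  have hkey : ∫ ω, Y ω * X ω ∂μ = ∫ ω, Y ω ^ 2 ∂μ := by
    have h1 : ∫ ω, (μ[Y * X | MeasurableSpace.comap W inferInstance]) ω ∂μ
        = ∫ ω, (Y * X) ω ∂μ := integral_condExp hm
    have h2 : μ[Y * X | MeasurableSpace.comap W inferInstance]
        =ᵐ[μ] Y * μ[X | MeasurableSpace.comap W inferInstance] :=
      condExp_mul_of_stronglyMeasurable_left stronglyMeasurable_condExp hXYint hXint
    calc ∫ ω, Y ω * X ω ∂μ = ∫ ω, (μ[Y * X | MeasurableSpace.comap W inferInstance]) ω ∂μ := by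
          rw [h1]; rfl
      _ = ∫ ω, Y ω ^ 2 ∂μ := by
          refine integral_congr_ae (h2.trans ?_)
          filter_upwards with ω
          simp [hY, condMean, sq]
  -- mmse = 1 - ∫ Y^2
  have hmmse : mmse μ X W = 1 - ∫ ω, Y ω ^ 2 ∂μ := by
    have hexp : ∀ ω, (X ω - Y ω) ^ 2 = 1 - 2 * (Y ω * X ω) + Y ω ^ 2 := by
      intro ω; have := hXsq ω; ring_nf; nlinarith [hXsq ω]
    unfold mmse
    rw [show (fun ω => (X ω - Y ω) ^ 2) = fun ω => 1 - 2 * (Y ω * X ω) + Y ω ^ 2 from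
      funext hexp]
    have hA : Integrable (fun ω => 1 - 2 * (Y ω * X ω)) μ :=
      (integrable_const (1:ℝ)).sub (hXYint.const_mul 2)
    have hB : Integrable (fun ω => 2 * (Y ω * X ω)) μ := hXYint.const_mul 2
    rw [integral_add hA hYsq_int, integral_sub (integrable_const (1:ℝ)) hB]
    simp only [integral_const, measure_univ, probReal_univ, ENNReal.toReal_one, smul_eq_mul, one_mul]
    rw [integral_const_mul, hkey]
    ring
  have habs_int : Integrable (fun ω => |Y ω|) μ := hYint.abs
  have h1 : ∫ ω, Y ω ^ 2 ∂μ ≤ ∫ ω, |Y ω| ∂μ := by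
    refine integral_mono_ae hYsq_int habs_int ?_
    filter_upwards [hYbdd] with ω hb
    calc Y ω ^ 2 = |Y ω| ^ 2 := (sq_abs _).symm
      _ ≤ |Y ω| := by nlinarith [abs_nonneg (Y ω)]
  have habs_nonneg : 0 ≤ ∫ ω, |Y ω| ∂μ := integral_nonneg fun ω => abs_nonneg _
  have h2 : (∫ ω, |Y ω| ∂μ) ^ 2 ≤ ∫ ω, Y ω ^ 2 ∂μ := by
    have hmem : MemLp (fun ω => |Y ω|) 2 μ := by
      refine MemLp.of_bound hYint.abs.aestronglyMeasurable 1 ?_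
      filter_upwards [hYbdd] with ω hb
      simpa [Real.norm_eq_abs, abs_abs] using hb
    have hv := variance_nonneg (fun ω => |Y ω|) μ
    rw [variance_eq_sub hmem] at hv
    have : (∫ ω, |Y ω| ^ 2 ∂μ) = ∫ ω, Y ω ^ 2 ∂μ := by
      refine integral_congr_ae ?_
      filter_upwards with ω; rw [sq_abs]
    simp only [Pi.pow_apply] at hv
    linarith [hv, this ▸ hv]
  have hBER : BER μ X W = (1 - ∫ ω, |Y ω| ∂μ) / 2 := rfl
  constructor
  · -- lower bound
    rw [hBER, hmmse]
    have : ∫ ω, |Y ω| ∂μ ≤ Real.sqrt (1 - (1 - ∫ ω, Y ω ^ 2 ∂μ)) := by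
      rw [show 1 - (1 - ∫ ω, Y ω ^ 2 ∂μ) = ∫ ω, Y ω ^ 2 ∂μ from by ring]
      exact (Real.le_sqrt habs_nonneg (integral_nonneg fun ω => sq_nonneg _)).mpr h2
    linarith
  · rw [hBER, hmmse]; linarith
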